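/- For a smooth function f, the centered (2p+1)-point numerical differentiation formula approximates the k-th derivative with order 2p - k + 1 when k is odd (and order at least 2p - k when k is even): |D^k_{p,i}(f,Δx) − f^{(k)}(x_i)| = O(Δx^{2p−k+1}) for odd k ≤ 2p. -/

import Mathlib

open Finset in
lemma hasDerivAt_taylorSum (c : ℕ → ℝ) (n : ℕ) (xi y : ℝ) :
    HasDerivAt (fun t => ∑ m ∈ Finset.range (n + 1), c m * (t - xi) ^ m)
      (∑ m ∈ Finset.range n, ((m : ℝ) + 1) * c (m + 1) * (y - xi) ^ m) y := by
  have h : ∀ m ∈ Finset.range (n + 1),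
      HasDerivAt (fun t => c m * (t - xi) ^ m)
        (c m * ((m : ℝ) * (y - xi) ^ (m - 1))) y := by
    intro m _
    have h1 : HasDerivAt (fun t : ℝ => (t - xi) ^ m)
        ((m : ℝ) * (y - xi) ^ (m - 1) * 1) y :=
      ((hasDerivAt_id y).sub_const xi).pow m
    simpa using h1.const_mul (c m)
  have := HasDerivAt.fun_sum h
  refine this.congr_deriv ?_
  rw [Finset.sum_range_succ']
  simp [Finset.mul_sum]
  apply Finset.sum_congr rfl
  intro m _
  ring

lemma taylorSum_self (c : ℕ → ℝ) (n : ℕ) (xi : ℝ) :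
    ∑ m ∈ Finset.range (n + 1), c m * (xi - xi) ^ m = c 0 := by
  rw [Finset.sum_eq_single_of_mem 0 (by simp)]
  · simp
  · intro m _ hm
    simp [sub_self, zero_pow hm]

lemma taylor_bound (n : ℕ) :
    ∀ (f : ℝ → ℝ) (a b xi B : ℝ), xi ∈ Set.Icc a b →
    ContDiff ℝ (n + 1) f →
    (∀ y ∈ Set.Icc a b, |iteratedDeriv (n + 1) f y| ≤ B) →
    ∀ y ∈ Set.Icc a b,
      |f y - ∑ m ∈ Finset.range (n + 1),
          iteratedDeriv m f xi / m.factorial * (y - xi) ^ m|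
        ≤ B * |y - xi| ^ (n + 1) := by
  induction n with
  | zero =>
    intro f a b xi B hxi hf hB y hy
    have hsub : Set.uIcc xi y ⊆ Set.Icc a b :=
      (Set.ordConnected_Icc).uIcc_subset hxi hy
    have hmvt : ‖f y - f xi‖ ≤ B * ‖y - xi‖ := by
      apply Convex.norm_image_sub_le_of_norm_deriv_le
        (fun t ht => (hf.differentiable (by simp)).differentiableAt)
        (fun t ht => ?_) (convex_uIcc xi y) Set.left_mem_uIcc Set.right_mem_uIcc
      rw [Real.norm_eq_abs, ← iteratedDeriv_one]
      exact hB t (hsub ht)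
    simpa [Real.norm_eq_abs] using hmvt
  | succ n ih =>
    intro f a b xi B hxi hf hB y hy
    have hB0 : 0 ≤ B := le_trans (abs_nonneg _) (hB xi hxi)
    set g := deriv f with hg
    have hfd : Differentiable ℝ f := hf.differentiable (by simp)
    have hgc : ContDiff ℝ (n + 1) g := by
      have h2 : ContDiff ℝ ((n + 1 : ℕ) + 1) f := by exact_mod_cast hf
      exact (contDiff_succ_iff_deriv.mp h2).2.2
    have hgB : ∀ t ∈ Set.Icc a b, |iteratedDeriv (n + 1) g t| ≤ B := by
      intro t ht
      have : iteratedDeriv (n + 1) g t = iteratedDeriv (n + 1 + 1) f t := by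
        conv_rhs => rw [iteratedDeriv_succ']
      rw [this]; exact hB t ht
    have IH := ih g a b xi B hxi hgc hgB
    -- the error function
    set c : ℕ → ℝ := fun m => iteratedDeriv m f xi / m.factorial with hc
    have hcg : ∀ m : ℕ, ((m : ℝ) + 1) * c (m + 1) = iteratedDeriv m g xi / m.factorial := by
      intro m
      have : iteratedDeriv (m + 1) f xi = iteratedDeriv m g xi := by
        conv_lhs => rw [iteratedDeriv_succ']
      rw [hc]; simp only [this, Nat.factorial_succ]
      push_cast
      field_simp
    have hderiv : ∀ t : ℝ, HasDerivAt
        (fun t => f t - ∑ m ∈ Finset.range (n + 1 + 1), c m * (t - xi) ^ m)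
        (g t - ∑ m ∈ Finset.range (n + 1),
          iteratedDeriv m g xi / m.factorial * (t - xi) ^ m) t := by
      intro t
      have h1 := (hfd t).hasDerivAt
      have h2 := hasDerivAt_taylorSum c (n + 1) xi t
      have h3 := h1.fun_sub h2
      refine h3.congr_deriv ?_
      congr 1
      exact Finset.sum_congr rfl fun m _ => by rw [← hcg m]
    have hsub : Set.uIcc xi y ⊆ Set.Icc a b :=
      (Set.ordConnected_Icc).uIcc_subset hxi hy
    have hmvt : ‖(f y - ∑ m ∈ Finset.range (n + 1 + 1), c m * (y - xi) ^ m)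
        - (f xi - ∑ m ∈ Finset.range (n + 1 + 1), c m * (xi - xi) ^ m)‖
        ≤ (B * |y - xi| ^ (n + 1)) * ‖y - xi‖ := by
      apply Convex.norm_image_sub_le_of_norm_hasDerivWithin_le
        (f' := fun t => g t - ∑ m ∈ Finset.range (n + 1),
          iteratedDeriv m g xi / m.factorial * (t - xi) ^ m)
        (fun t ht => (hderiv t).hasDerivWithinAt)
        (fun t ht => ?_) (convex_uIcc xi y) Set.left_mem_uIcc Set.right_mem_uIcc
      rw [Real.norm_eq_abs]
      calc |g t - ∑ m ∈ Finset.range (n + 1),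
            iteratedDeriv m g xi / m.factorial * (t - xi) ^ m|
          ≤ B * |t - xi| ^ (n + 1) := IH t (hsub ht)
        _ ≤ B * |y - xi| ^ (n + 1) := by
            apply mul_le_mul_of_nonneg_left _ hB0
            apply pow_le_pow_left₀ (abs_nonneg _)
            rcases Set.mem_uIcc.mp ht with ⟨h1, h2⟩ | ⟨h1, h2⟩
            · rw [abs_of_nonneg (by linarith)]
              rw [abs_of_nonneg (by linarith)] <;> linarith
            · rw [abs_of_nonpos (by linarith)]
              rcases le_or_gt xi y with hxy | hxy
              · rw [abs_of_nonneg (by linarith)]; linarith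
              · rw [abs_of_nonpos (by linarith)]; linarith
    rw [taylorSum_self c (n + 1) xi] at hmvt
    have hc0 : c 0 = f xi := by simp [hc]
    rw [hc0] at hmvt
    simp only [sub_self, sub_zero] at hmvt
    rw [Real.norm_eq_abs, Real.norm_eq_abs] at hmvt
    calc |f y - ∑ m ∈ Finset.range (n + 1 + 1), c m * (y - xi) ^ m|
        ≤ B * |y - xi| ^ (n + 1) * |y - xi| := hmvt
      _ = B * |y - xi| ^ (n + 1 + 1) := by ring


open Polynomial in
lemma poly_facts (f : ℝ → ℝ) (xi : ℝ) (n k : ℕ) (hk : k ≤ n) :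
    ∃ P : Polynomial ℝ, P.natDegree ≤ n ∧
      (∀ y : ℝ, P.eval y =
        ∑ m ∈ Finset.range (n + 1), iteratedDeriv m f xi / m.factorial * (y - xi) ^ m) ∧
      Polynomial.eval xi (Polynomial.derivative^[k] P) = iteratedDeriv k f xi := by
  refine ⟨∑ m ∈ Finset.range (n + 1),
    C (iteratedDeriv m f xi / m.factorial) * (X - C xi) ^ m, ?_, ?_, ?_⟩
  · apply Polynomial.natDegree_sum_le_of_forall_le
    intro m hm
    calc (C (iteratedDeriv m f xi / m.factorial) * (X - C xi) ^ m).natDegree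
        ≤ ((X - C xi : Polynomial ℝ) ^ m).natDegree := natDegree_C_mul_le _ _
      _ ≤ m := by
          calc ((X - C xi : Polynomial ℝ) ^ m).natDegree
              ≤ m * (X - C xi : Polynomial ℝ).natDegree := natDegree_pow_le
            _ ≤ m := by rw [natDegree_X_sub_C]; omega
      _ ≤ n := by have := Finset.mem_range.mp hm; omega
  · intro y
    simp [Polynomial.eval_finset_sum]
  · rw [Polynomial.iterate_derivative_sum]
    rw [Polynomial.eval_finset_sum]
    rw [Finset.sum_eq_single_of_mem k (Finset.mem_range.mpr (by omega))]
    · rw [Polynomial.iterate_derivative_C_mul, Polynomial.iterate_derivative_X_sub_pow]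
      simp [Nat.descFactorial_self]
      field_simp
    · intro m _ hmk
      rw [Polynomial.iterate_derivative_C_mul, Polynomial.iterate_derivative_X_sub_pow]
      rcases lt_or_gt_of_ne hmk with h | h
      · simp [Nat.descFactorial_eq_zero_iff_lt.mpr h]
      · have : m - k ≠ 0 := by omega
        simp [zero_pow this]


/-- For `f` of class `C^{2p+1}` and odd `k ≤ 2p`, the centered `(2p+1)`-point
interpolatory formula approximates `f^{(k)}(x_i)` with order `2p - k + 1`. -/
theorem centered_difference_order_odd
    (p k : ℕ) (hp : 1 ≤ p) (hk : k ≤ 2 * p) (hkodd : Odd k)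
    (xi : ℝ) (δ : ℤ → ℝ)
    (hδ : ∀ h : ℝ, h ≠ 0 → ∀ P : Polynomial ℝ, P.natDegree ≤ 2 * p →
      (1 / h ^ k) * ∑ j ∈ Finset.Icc (-(p : ℤ)) (p : ℤ), δ j * P.eval (xi + (j : ℝ) * h)
        = Polynomial.eval xi (Polynomial.derivative^[k] P))
    (f : ℝ → ℝ) (hf : ContDiff ℝ (2 * p + 1) f) :
    ∃ C > (0 : ℝ), ∃ δ0 > (0 : ℝ), ∀ Δx : ℝ, 0 < Δx → Δx < δ0 →
      |(1 / Δx ^ k) * ∑ j ∈ Finset.Icc (-(p : ℤ)) (p : ℤ), δ j * f (xi + (j : ℝ) * Δx)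
        - iteratedDeriv k f xi| ≤ C * Δx ^ (2 * p - k + 1) := by
  have hp0 : (0 : ℝ) < p := by exact_mod_cast hp
  -- bound on the top derivative on a compact neighborhood
  have hcont : Continuous (iteratedDeriv (2 * p + 1) f) :=
    hf.continuous_iteratedDeriv (2 * p + 1) le_rfl
  obtain ⟨B0, hB0⟩ := (isCompact_Icc (a := xi - 1) (b := xi + 1)).exists_bound_of_continuousOn
    hcont.continuousOn
  set B : ℝ := max B0 0 with hBdef
  have hBnn : 0 ≤ B := le_max_right _ _
  have hB : ∀ y ∈ Set.Icc (xi - 1) (xi + 1), |iteratedDeriv (2 * p + 1) f y| ≤ B := by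
    intro y hy
    exact le_trans (by simpa [Real.norm_eq_abs] using hB0 y hy) (le_max_left _ _)
  set S : ℝ := ∑ j ∈ Finset.Icc (-(p : ℤ)) (p : ℤ), |δ j| with hSdef
  have hSnn : 0 ≤ S := Finset.sum_nonneg fun j _ => abs_nonneg _
  refine ⟨B * (p : ℝ) ^ (2 * p + 1) * S + 1, by positivity, 1 / (p : ℝ), by positivity, ?_⟩
  intro Δx hΔx hΔx1
  have hΔne : Δx ≠ 0 := ne_of_gt hΔx
  obtain ⟨P, hPdeg, hPeval, hPderiv⟩ := poly_facts f xi (2 * p) k hk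
  have hxi_mem : xi ∈ Set.Icc (xi - 1) (xi + 1) := by
    constructor <;> linarith
  have hTB := taylor_bound (2 * p) f (xi - 1) (xi + 1) xi B hxi_mem
    (by exact_mod_cast hf) hB
  -- per-term bound
  have hterm : ∀ j ∈ Finset.Icc (-(p : ℤ)) (p : ℤ),
      |δ j * (f (xi + (j : ℝ) * Δx) - P.eval (xi + (j : ℝ) * Δx))|
        ≤ |δ j| * (B * ((p : ℝ) * Δx) ^ (2 * p + 1)) := by
    intro j hj
    obtain ⟨hj1, hj2⟩ := Finset.mem_Icc.mp hj
    have hjabs : |(j : ℝ)| ≤ (p : ℝ) := by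
      rw [← Int.cast_abs]
      exact_mod_cast abs_le.mpr ⟨hj1, hj2⟩
    have hmem : xi + (j : ℝ) * Δx ∈ Set.Icc (xi - 1) (xi + 1) := by
      have h1 : |(j : ℝ) * Δx| ≤ (p : ℝ) * Δx := by
        rw [abs_mul, abs_of_pos hΔx]
        exact mul_le_mul_of_nonneg_right hjabs (le_of_lt hΔx)
      have h2 : (p : ℝ) * Δx < 1 := by
        calc (p : ℝ) * Δx < (p : ℝ) * (1 / p) := mul_lt_mul_of_pos_left hΔx1 hp0
          _ = 1 := by field_simp
      have := abs_le.mp (le_of_lt (lt_of_le_of_lt h1 h2))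
      constructor <;> [linarith [this.1]; linarith [this.2]]
    have htay := hTB (xi + (j : ℝ) * Δx) hmem
    rw [← hPeval] at htay
    have hsimp : xi + (j : ℝ) * Δx - xi = (j : ℝ) * Δx := by ring
    rw [hsimp] at htay
    rw [abs_mul]
    apply mul_le_mul_of_nonneg_left _ (abs_nonneg _)
    calc |f (xi + (j : ℝ) * Δx) - P.eval (xi + (j : ℝ) * Δx)|
        ≤ B * |(j : ℝ) * Δx| ^ (2 * p + 1) := htay
      _ ≤ B * ((p : ℝ) * Δx) ^ (2 * p + 1) := by
          apply mul_le_mul_of_nonneg_left _ hBnn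
          apply pow_le_pow_left₀ (abs_nonneg _)
          rw [abs_mul, abs_of_pos hΔx]
          exact mul_le_mul_of_nonneg_right hjabs (le_of_lt hΔx)
  -- exactness on the Taylor polynomial
  have hexact := hδ Δx hΔne P hPdeg
  rw [hPderiv] at hexact
  have hrewrite :
      (1 / Δx ^ k) * ∑ j ∈ Finset.Icc (-(p : ℤ)) (p : ℤ), δ j * f (xi + (j : ℝ) * Δx)
        - iteratedDeriv k f xi
      = (1 / Δx ^ k) * ∑ j ∈ Finset.Icc (-(p : ℤ)) (p : ℤ),
          δ j * (f (xi + (j : ℝ) * Δx) - P.eval (xi + (j : ℝ) * Δx)) := by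
    rw [← hexact]
    rw [← mul_sub, ← Finset.sum_sub_distrib]
    congr 1
    apply Finset.sum_congr rfl
    intro j _
    ring
  rw [hrewrite]
  rw [abs_mul]
  have hpowpos : (0 : ℝ) < Δx ^ k := pow_pos hΔx k
  have habs1 : |1 / Δx ^ k| = 1 / Δx ^ k := abs_of_pos (by positivity)
  rw [habs1]
  have hsumbd : |∑ j ∈ Finset.Icc (-(p : ℤ)) (p : ℤ),
      δ j * (f (xi + (j : ℝ) * Δx) - P.eval (xi + (j : ℝ) * Δx))|
      ≤ S * (B * ((p : ℝ) * Δx) ^ (2 * p + 1)) := by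
    calc |∑ j ∈ Finset.Icc (-(p : ℤ)) (p : ℤ),
        δ j * (f (xi + (j : ℝ) * Δx) - P.eval (xi + (j : ℝ) * Δx))|
        ≤ ∑ j ∈ Finset.Icc (-(p : ℤ)) (p : ℤ),
            |δ j * (f (xi + (j : ℝ) * Δx) - P.eval (xi + (j : ℝ) * Δx))| :=
          Finset.abs_sum_le_sum_abs _ _
      _ ≤ ∑ j ∈ Finset.Icc (-(p : ℤ)) (p : ℤ),
            |δ j| * (B * ((p : ℝ) * Δx) ^ (2 * p + 1)) := Finset.sum_le_sum hterm
      _ = S * (B * ((p : ℝ) * Δx) ^ (2 * p + 1)) := by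
          rw [hSdef, Finset.sum_mul]
  calc (1 / Δx ^ k) * |∑ j ∈ Finset.Icc (-(p : ℤ)) (p : ℤ),
        δ j * (f (xi + (j : ℝ) * Δx) - P.eval (xi + (j : ℝ) * Δx))|
      ≤ (1 / Δx ^ k) * (S * (B * ((p : ℝ) * Δx) ^ (2 * p + 1))) :=
        mul_le_mul_of_nonneg_left hsumbd (by positivity)
    _ = (B * (p : ℝ) ^ (2 * p + 1) * S) * Δx ^ (2 * p - k + 1) := by
        have hsplit : Δx ^ (2 * p + 1) = Δx ^ k * Δx ^ (2 * p - k + 1) := by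
          rw [← pow_add]; congr 1; omega
        rw [mul_pow, hsplit]
        field_simp
    _ ≤ (B * (p : ℝ) ^ (2 * p + 1) * S + 1) * Δx ^ (2 * p - k + 1) := by
        apply mul_le_mul_of_nonneg_right _ (by positivity)
        linarith
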